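/- Let p > 4 and suppose v : ℝ → ℝ is a bounded, nonincreasing C² function supported on J = (−∞, R*) with R* < ∞, satisfying −v'' = −√2/2 + 2^{(p−4)/4} v^{(p−2)/2} on J, v > 0 on J, v(R*) = v'(R*) = 0, lim_{r→−∞} v(r) = √2/2, and lim_{r→−∞} v'(r) = 0. Then a contradiction arises: multiplying the equation by v' and integrating over J gives 0 on the left side but (p−2)/(2p) > 0 on the right side. Hence no such v exists. -/

import Mathlib

open Real Filter Topology

/-- no bounded nonincreasing `C²` function `v`, positive on
`J = (−∞, R*)` and vanishing together with `v'` at `R* < ∞`, with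
`v → √2/2` and `v' → 0` at `−∞`, can solve
`−v'' = −√2/2 + 2^((p−4)/4) v^((p−2)/2)` on `J`. -/
theorem stmt_14 (p : ℝ) (hp : 4 < p) (Rstar : ℝ) (v : ℝ → ℝ)
    (hC1 : Differentiable ℝ v)
    (hC2 : ∀ r : ℝ, r < Rstar → DifferentiableAt ℝ (deriv v) r)
    (hmono : Antitone v) (hbd : ∃ M : ℝ, ∀ r : ℝ, |v r| ≤ M)
    (hpos : ∀ r : ℝ, r < Rstar → 0 < v r)
    (hsupp : ∀ r : ℝ, Rstar ≤ r → v r = 0)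
    (hbc : v Rstar = 0 ∧ deriv v Rstar = 0)
    (hode : ∀ r : ℝ, r < Rstar →
      - deriv (deriv v) r = - Real.sqrt 2 / 2 + (2 : ℝ) ^ ((p - 4) / 4) * (v r) ^ ((p - 2) / 2))
    (hlim : Tendsto v atBot (𝓝 (Real.sqrt 2 / 2)))
    (hlim' : Tendsto (deriv v) atBot (𝓝 (0 : ℝ))) :
    False := by
  have hp0 : (0 : ℝ) < p := by linarith
  set c : ℝ := (2 : ℝ) ^ ((p - 4) / 4) with hc
  set F : ℝ → ℝ := fun s => -(Real.sqrt 2 / 2) * s + c * (2 / p) * s ^ (p / 2) with hF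
  set G : ℝ → ℝ := fun r => deriv v r * deriv v r / 2 + F (v r) with hG
  -- Step 1: G has derivative 0 on J
  have hGderiv : ∀ r : ℝ, r < Rstar → HasDerivAt G 0 r := by
    intro r hr
    have hv : HasDerivAt v (deriv v r) r := (hC1 r).hasDerivAt
    have hv' : HasDerivAt (deriv v) (deriv (deriv v) r) r := (hC2 r hr).hasDerivAt
    have h1 : HasDerivAt (fun r => deriv v r * deriv v r / 2)
        (deriv v r * deriv (deriv v) r) r := by
      have := (hv'.mul hv').div_const 2
      exact this.congr_deriv (by ring)
    have h2 : HasDerivAt (fun s : ℝ => s ^ (p / 2)) ((p / 2) * (v r) ^ (p / 2 - 1)) (v r) :=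
      Real.hasDerivAt_rpow_const (Or.inl (ne_of_gt (hpos r hr)))
    have h3 : HasDerivAt (fun r => (v r) ^ (p / 2))
        ((p / 2) * (v r) ^ (p / 2 - 1) * deriv v r) r := h2.comp r hv
    have h4 : HasDerivAt (fun r => F (v r))
        (-(Real.sqrt 2 / 2) * deriv v r
          + c * (2 / p) * ((p / 2) * (v r) ^ (p / 2 - 1) * deriv v r)) r := by
      exact (hv.const_mul (-(Real.sqrt 2 / 2))).add (h3.const_mul (c * (2 / p)))
    have h5 := h1.add h4
    have hexp : p / 2 - 1 = (p - 2) / 2 := by ring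
    have hode' : deriv (deriv v) r = Real.sqrt 2 / 2 - c * (v r) ^ ((p - 2) / 2) := by
      have := hode r hr; linarith
    refine h5.congr_deriv ?_
    rw [hexp, hode']
    field_simp
    ring
  -- Step 2: G is constant on J
  have hconst : ∀ a b : ℝ, a ≤ b → b < Rstar → G b = G a := by
    intro a b hab hb
    have hcont : ContinuousOn G (Set.Icc a b) := fun x hx =>
      ((hGderiv x (lt_of_le_of_lt hx.2 hb)).continuousAt).continuousWithinAt
    have hder : ∀ x ∈ Set.Ico a b, HasDerivWithinAt G 0 (Set.Ici x) x := fun x hx =>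
      (hGderiv x (lt_of_lt_of_le hx.2 hb.le)).hasDerivWithinAt
    exact constant_of_has_deriv_right_zero hcont hder b (Set.right_mem_Icc.2 hab)
  set k : ℝ := G (Rstar - 1) with hk
  have hGk : ∀ r : ℝ, r < Rstar → G r = k := by
    intro r hr
    rcases le_total r (Rstar - 1) with h | h
    · exact (hconst r (Rstar - 1) h (by linarith)).symm
    · exact hconst (Rstar - 1) r h hr
  -- Step 3: compute k via the limit at -∞
  have hsqrt2 : Real.sqrt 2 / 2 = (2 : ℝ) ^ (-(1 : ℝ) / 2) := by
    rw [Real.sqrt_eq_rpow]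
    rw [show (-(1:ℝ)/2) = 1/2 - 1 by ring, Real.rpow_sub (by norm_num), Real.rpow_one]
  have hFval : F (Real.sqrt 2 / 2) = 1 / p - 1 / 2 := by
    have h1 : (Real.sqrt 2 / 2) ^ (p / 2) = (2 : ℝ) ^ (-(1 : ℝ) / 2 * (p / 2)) := by
      rw [hsqrt2, ← Real.rpow_mul (by norm_num : (0:ℝ) ≤ 2)]
    have h2 : c * (Real.sqrt 2 / 2) ^ (p / 2) = 1 / 2 := by
      rw [h1, hc, ← Real.rpow_add (by norm_num : (0:ℝ) < 2)]
      rw [show (p - 4) / 4 + -(1:ℝ) / 2 * (p / 2) = -1 by ring]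
      norm_num [Real.rpow_neg_one]
    have h3 : Real.sqrt 2 / 2 * (Real.sqrt 2 / 2) = 1 / 2 := by
      rw [div_mul_div_comm, Real.mul_self_sqrt (by norm_num : (0:ℝ) ≤ 2)]
      norm_num
    simp only [hF]
    have : c * (2 / p) * (Real.sqrt 2 / 2) ^ (p / 2) = (2 / p) * (c * (Real.sqrt 2 / 2) ^ (p / 2)) := by
      ring
    rw [this, h2, neg_mul, h3]
    field_simp
    ring
  -- limit of G at -infinity
  have hFcont : ContinuousAt F (Real.sqrt 2 / 2) := by
    have hr : ContinuousAt (fun s : ℝ => s ^ (p / 2)) (Real.sqrt 2 / 2) := by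
      apply Real.continuousAt_rpow_const
      left
      positivity
    exact ((continuousAt_const.mul continuousAt_id).add (continuousAt_const.mul hr))
  have hlimG : Tendsto G atBot (𝓝 (0 * 0 / 2 + F (Real.sqrt 2 / 2))) := by
    exact ((hlim'.mul hlim').div_const 2).add (hFcont.tendsto.comp hlim)
  have hlimGk : Tendsto G atBot (𝓝 k) := by
    apply Tendsto.congr' _ tendsto_const_nhds
    filter_upwards [eventually_le_atBot (Rstar - 1)] with r hr
    exact (hGk r (by linarith)).symm
  have hkval : k = 1 / p - 1 / 2 := by
    have := tendsto_nhds_unique hlimGk hlimG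
    rw [this, hFval]; ring
  have hkneg : k < 0 := by
    rw [hkval]
    have : 1 / p < 1 / 2 := by
      apply one_div_lt_one_div_of_lt <;> linarith
    linarith
  -- Step 4: limit of F ∘ v as r → Rstar⁻ is F 0 = 0, but F (v r) ≤ k
  have hF0 : F 0 = 0 := by
    simp only [hF]
    rw [Real.zero_rpow (by positivity : p / 2 ≠ 0)]
    ring
  have hFcont0 : ContinuousAt F 0 := by
    have hr : ContinuousAt (fun s : ℝ => s ^ (p / 2)) 0 := by
      apply Real.continuousAt_rpow_const
      right
      positivity
    exact ((continuousAt_const.mul continuousAt_id).add (continuousAt_const.mul hr))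
  have hvlim : Tendsto (fun r => F (v r)) (𝓝[<] Rstar) (𝓝 0) := by
    have h := (hC1 Rstar).continuousAt.continuousWithinAt (s := Set.Iio Rstar)
    have h1 := h.tendsto
    rw [hbc.1] at h1
    have h2 := hFcont0.tendsto.comp h1
    rwa [hF0] at h2
  clear_value c F G k
  have hle : ∀ᶠ r in 𝓝[<] Rstar, F (v r) ≤ k := by
    filter_upwards [self_mem_nhdsWithin] with r hr
    have hGr := hGk r hr
    have hsq : 0 ≤ deriv v r * deriv v r / 2 :=
      div_nonneg (mul_self_nonneg _) (by norm_num)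
    simp only [hG] at hGr
    linarith
  have : (0 : ℝ) ≤ k := le_of_tendsto hvlim hle
  linarith
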